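/- Explicit Upper Bound on Price of Frugality for BEST Objectives with XOS f: Let (A, f, c) be a multi-agent contract instance with n ≥ 1 agents and XOS f, let 0 < b < B ≤ 1, let φ be a BEST objective, and suppose p({i}) ≤ b for every agent i ∈ A. Then Max-φ(B) ≤ (1 + min(4n, 8·⌈8B/b⌉ − 8)) · Max-φ(b). In particular, Max-φ(B) = O(min(B/b, n)) · Max-φ(b). -/

import Mathlib

open scoped BigOperators ENNReal
open Finset

/-- Marginal contribution of agent `i` to set `S`: `f_S(i) = f(S) - f(S \ {i})`. -/
noncomputable def marginal {α : Type*} [DecidableEq α] (f : Finset α → ℝ) (S : Finset α)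
    (i : α) : ℝ :=
  f S - f (S.erase i)

/-- Payment needed to incentivize `S`, valued in `[0,∞]`, with the conventions
`0/0 = 0` and `x/0 = ∞` for `x > 0` (these hold for ENNReal division). -/
noncomputable def payment {α : Type*} [DecidableEq α] (f : Finset α → ℝ) (c : α → ℝ)
    (S : Finset α) : ℝ≥0∞ :=
  ∑ i ∈ S, ENNReal.ofReal (c i) / ENNReal.ofReal (marginal f S i)

/-- The principal's profit from incentivizing `S`: `g(S) = (1 - p(S)) · f(S)`. -/
noncomputable def profit {α : Type*} [DecidableEq α] (f : Finset α → ℝ) (c : α → ℝ)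
    (S : Finset α) : ℝ :=
  (1 - (payment f c S).toReal) * f S

/-- `f` is monotone. -/
def IsMonotoneFn {α : Type*} (f : Finset α → ℝ) : Prop :=
  ∀ ⦃S T : Finset α⦄, S ⊆ T → f S ≤ f T

/-- `f` is subadditive. -/
def IsSubadditive {α : Type*} [DecidableEq α] (f : Finset α → ℝ) : Prop :=
  ∀ S T : Finset α, f (S ∪ T) ≤ f S + f T

/-- `f` is submodular (decreasing marginal values). -/
def IsSubmodular {α : Type*} [DecidableEq α] (f : Finset α → ℝ) : Prop :=
  ∀ ⦃S T : Finset α⦄, S ⊆ T → ∀ i ∉ T, f (insert i T) - f T ≤ f (insert i S) - f S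

/-- `f` is additive. -/
def IsAdditive {α : Type*} [DecidableEq α] (f : Finset α → ℝ) : Prop :=
  ∀ S : Finset α, f S = ∑ i ∈ S, f {i}

/-- `f` is XOS: a finite max of nonnegative additive functions. -/
def IsXOS {α : Type*} (f : Finset α → ℝ) : Prop :=
  ∃ (k : ℕ) (a : Fin (k + 1) → α → ℝ),
    (∀ j i, 0 ≤ a j i) ∧
    ∀ S : Finset α, f S = Finset.univ.sup' Finset.univ_nonempty (fun j => ∑ i ∈ S, a j i)

/-- Agent `i` is light: it can be incentivized with payment at most `1/2`. -/
def isLight {α : Type*} [DecidableEq α] (f : Finset α → ℝ) (c : α → ℝ) (i : α) : Prop :=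
  payment f c {i} ≤ ENNReal.ofReal (1 / 2)

/-- `S` is budget-feasible for budget `B`. -/
def feasible {α : Type*} [DecidableEq α] (f : Finset α → ℝ) (c : α → ℝ) (B : ℝ)
    (S : Finset α) : Prop :=
  payment f c S ≤ ENNReal.ofReal B

/-- `S` is a budget-feasible set of light agents. -/
def feasibleLight {α : Type*} [DecidableEq α] (f : Finset α → ℝ) (c : α → ℝ) (B : ℝ)
    (S : Finset α) : Prop :=
  (∀ i ∈ S, isLight f c i) ∧ payment f c S ≤ ENNReal.ofReal B

/-- The maximum (supremum) value of objective `φ` over sets satisfying `P`. -/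
noncomputable def maxVal {α : Type*} (φ : Finset α → ℝ) (P : Finset α → Prop) : ℝ :=
  sSup (φ '' {S | P S})

/-- `φ` is a BEST objective for the instance `(f, c)`: it is nonnegative, sandwiched between
profit and reward, and satisfies `φ(S) ≤ f(S \ {i}) + φ({i})` for `i ∈ S`. -/
def IsBEST {α : Type*} [DecidableEq α] (f : Finset α → ℝ) (c : α → ℝ)
    (φ : Finset α → ℝ) : Prop :=
  (∀ S, 0 ≤ φ S) ∧
  (∀ S, φ S ≤ f S) ∧
  (∀ S, payment f c S ≤ 1 → (1 - (payment f c S).toReal) * f S ≤ φ S) ∧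
  (∀ S, ∀ i ∈ S, φ S ≤ f (S.erase i) + φ {i})

/-- `φ` is a BEST objective for the instance `(f, c)` restricted to sets satisfying `P`. -/
def IsBESTOn {α : Type*} [DecidableEq α] (f : Finset α → ℝ) (c : α → ℝ)
    (P : Finset α → Prop) (φ : Finset α → ℝ) : Prop :=
  (∀ S, P S → 0 ≤ φ S) ∧
  (∀ S, P S → φ S ≤ f S) ∧
  (∀ S, P S → payment f c S ≤ 1 → (1 - (payment f c S).toReal) * f S ≤ φ S) ∧
  (∀ S, P S → ∀ i ∈ S, φ S ≤ f (S.erase i) + φ {i})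

/-- XOS support: at any set `S` there is an additive function below `f` agreeing at `S`. -/
lemma xos_support {α : Type*} {f : Finset α → ℝ}
    (hxos : ∃ (k : ℕ) (a : Fin (k + 1) → α → ℝ),
      (∀ j i, 0 ≤ a j i) ∧
      ∀ S : Finset α, f S = Finset.univ.sup' Finset.univ_nonempty (fun j => ∑ i ∈ S, a j i))
    (S : Finset α) :
    ∃ av : α → ℝ, (∀ i, 0 ≤ av i) ∧ (∀ T : Finset α, ∑ i ∈ T, av i ≤ f T) ∧
      f S = ∑ i ∈ S, av i := by
  obtain ⟨k, a, ha0, hsup⟩ := hxos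
  obtain ⟨j₀, -, hj₀⟩ := Finset.exists_mem_eq_sup' (Finset.univ_nonempty)
    (fun j => ∑ i ∈ S, a j i)
  refine ⟨a j₀, fun i => ha0 j₀ i, fun T => ?_, by rw [hsup S, hj₀]⟩
  rw [hsup T]
  exact Finset.le_sup' (fun j => ∑ i ∈ T, a j i) (Finset.mem_univ j₀)

/-- Extract a chunk with sum in `(t/2, t]` from a family of small nonnegative values. -/
lemma extract_chunk {α : Type*} [DecidableEq α] (v : α → ℝ) (t : ℝ) (ht : 0 < t) :
    ∀ s : Finset α, (∀ i ∈ s, 0 ≤ v i) → (∀ i ∈ s, v i ≤ t / 2) →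
      t / 2 < ∑ i ∈ s, v i →
      ∃ u ⊆ s, t / 2 < ∑ i ∈ u, v i ∧ ∑ i ∈ u, v i ≤ t := by
  intro s
  induction s using Finset.strongInduction with
  | _ s ih =>
    intro h0 hsmall hbig
    by_cases hst : ∑ i ∈ s, v i ≤ t
    · exact ⟨s, Finset.Subset.refl s, hbig, hst⟩
    · push_neg at hst
      have hs : s.Nonempty := by
        rcases Finset.eq_empty_or_nonempty s with rfl | h
        · simp at hbig; linarith
        · exact h
      obtain ⟨x, hx⟩ := hs
      have hsub : s.erase x ⊂ s := Finset.erase_ssubset hx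
      have hsum : ∑ i ∈ s.erase x, v i = (∑ i ∈ s, v i) - v x := by
        rw [← Finset.add_sum_erase s v hx]; ring
      have hbig' : t / 2 < ∑ i ∈ s.erase x, v i := by
        rw [hsum]
        have := hsmall x hx
        linarith
      obtain ⟨u, hu, h1, h2⟩ := ih (s.erase x) hsub
        (fun i hi => h0 i (Finset.mem_of_mem_erase hi))
        (fun i hi => hsmall i (Finset.mem_of_mem_erase hi)) hbig'
      exact ⟨u, hu.trans (Finset.erase_subset x s), h1, h2⟩

/-- Packing lemma: if every ≤-`t` chunk has `w`-sum at most `C`, then a set of small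
items with `v`-sum at most `N·t/2` has `w`-sum at most `(N+1)·C`. -/
lemma pack {α : Type*} [DecidableEq α] (v w : α → ℝ) (t C : ℝ) (ht : 0 < t) (hC : 0 ≤ C)
    (s₀ : Finset α)
    (hbound : ∀ u ⊆ s₀, ∑ i ∈ u, v i ≤ t → ∑ i ∈ u, w i ≤ C) :
    ∀ (N : ℕ) (s : Finset α), s ⊆ s₀ → (∀ i ∈ s, 0 ≤ v i) → (∀ i ∈ s, v i ≤ t / 2) →
      ∑ i ∈ s, v i ≤ N * (t / 2) → ∑ i ∈ s, w i ≤ (N + 1) * C := by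
  intro N
  induction N with
  | zero =>
    intro s hs h0 hsmall hsum
    have : ∑ i ∈ s, v i ≤ t := by
      have : ((0:ℕ):ℝ) * (t/2) ≤ t := by norm_num; linarith
      linarith [hsum.trans this]
    simpa using hbound s hs this
  | succ N ih =>
    intro s hs h0 hsmall hsum
    by_cases hst : ∑ i ∈ s, v i ≤ t
    · have := hbound s hs hst
      have hcast : (0:ℝ) ≤ (N:ℝ) + 1 := by positivity
      have hge : (1:ℝ) ≤ ((N+1:ℕ):ℝ) + 1 := by push_cast; linarith [Nat.cast_nonneg (α := ℝ) N]
      calc ∑ i ∈ s, w i ≤ C := this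
        _ = 1 * C := (one_mul C).symm
        _ ≤ (((N+1:ℕ):ℝ) + 1) * C := by apply mul_le_mul_of_nonneg_right hge hC
    · push_neg at hst
      obtain ⟨u, hu, h1, h2⟩ := extract_chunk v t ht s h0 hsmall (by linarith)
      have hCu : ∑ i ∈ u, w i ≤ C := hbound u (hu.trans hs) h2
      have hsplit : ∑ i ∈ s \ u, v i + ∑ i ∈ u, v i = ∑ i ∈ s, v i :=
        Finset.sum_sdiff hu
      have hsplitw : ∑ i ∈ s \ u, w i + ∑ i ∈ u, w i = ∑ i ∈ s, w i :=
        Finset.sum_sdiff hu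
      have hrest : ∑ i ∈ s \ u, v i ≤ N * (t / 2) := by
        push_cast at hsum ⊢
        linarith
      have := ih (s \ u) ((Finset.sdiff_subset).trans hs)
        (fun i hi => h0 i (Finset.mem_sdiff.mp hi).1)
        (fun i hi => hsmall i (Finset.mem_sdiff.mp hi).1) hrest
      push_cast
      push_cast at this
      linarith

set_option maxHeartbeats 1000000 in
/-- **Explicit Upper Bound on Price of Frugality for BEST Objectives with XOS f.** -/
theorem pof_upper_xos_best {α : Type*} [DecidableEq α] [Fintype α] [Nonempty α]
    (f : Finset α → ℝ) (c : α → ℝ) (φ : Finset α → ℝ)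
    (hf01 : ∀ S, f S ∈ Set.Icc (0 : ℝ) 1) (hf0 : f ∅ = 0)
    (hxos : IsXOS f) (hc : ∀ i, 0 ≤ c i)
    (hφ : IsBEST f c φ)
    (b B : ℝ) (hb : 0 < b) (hbB : b < B) (hB : B ≤ 1)
    (hsing : ∀ i, payment f c {i} ≤ ENNReal.ofReal b) :
    maxVal φ (feasible f c B) ≤
      (1 + min (4 * (Fintype.card α : ℝ)) (8 * ((⌈8 * B / b⌉ : ℤ) : ℝ) - 8)) *
        maxVal φ (feasible f c b) := by
  classical
  set M := maxVal φ (feasible f c b) with hMdef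
  have hB0 : (0:ℝ) < B := hb.trans hbB
  have hb1 : b ≤ 1 := (le_of_lt hbB).trans hB
  have hfeas_empty_b : feasible f c b ∅ := by
    simp only [feasible, payment, Finset.sum_empty]; exact zero_le
  have hfeas_empty_B : feasible f c B ∅ := by
    simp only [feasible, payment, Finset.sum_empty]; exact zero_le
  have hbdd : BddAbove (φ '' {S | feasible f c b S}) := by
    refine ⟨1, ?_⟩; rintro x ⟨T, -, rfl⟩
    exact (hφ.2.1 T).trans (hf01 T).2
  have hφleM : ∀ T, feasible f c b T → φ T ≤ M := fun T hT =>
    le_csSup hbdd ⟨T, hT, rfl⟩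
  have hM0 : 0 ≤ M := (hφ.1 ∅).trans (hφleM ∅ hfeas_empty_b)
  have hsing1 : ∀ i, payment f c {i} ≤ 1 := fun i =>
    (hsing i).trans (ENNReal.ofReal_le_one.mpr hb1)
  have hpay_single : ∀ i : α, payment f c {i} =
      ENNReal.ofReal (c i) / ENNReal.ofReal (f {i}) := by
    intro i
    simp [payment, marginal, Finset.erase_singleton, hf0]
  have hsingval : ∀ i, f {i} - c i ≤ M := by
    intro i
    have hlow := hφ.2.2.1 {i} (hsing1 i)
    have hfi0 : 0 ≤ f {i} := (hf01 {i}).1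
    have hup : φ {i} ≤ M := hφleM {i} (hsing i)
    by_cases hf : 0 < f {i}
    · have htr : (payment f c {i}).toReal = c i / f {i} := by
        rw [hpay_single i, ← ENNReal.ofReal_div_of_pos hf,
          ENNReal.toReal_ofReal (div_nonneg (hc i) hfi0)]
      rw [htr] at hlow
      have hne : f {i} ≠ 0 := ne_of_gt hf
      have heq : (1 - c i / f {i}) * f {i} = f {i} - c i := by field_simp
      rw [heq] at hlow
      linarith
    · have h0 : f {i} = 0 := le_antisymm (not_lt.mp hf) hfi0
      rw [h0]; linarith [hc i]
  -- numeric setup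
  set Ncast : ℝ := ((⌈8 * B / b⌉ : ℤ) : ℝ) with hNcastdef
  set N : ℕ := (⌈8 * B / b⌉ : ℤ).toNat with hNdef
  have hceil9 : (9:ℤ) ≤ ⌈8 * B / b⌉ := by
    have h8 : (8:ℝ) < 8 * B / b := by
      rw [lt_div_iff₀ hb]; linarith
    have := Int.lt_ceil.mpr (by exact_mod_cast h8 : ((8:ℤ):ℝ) < 8 * B / b)
    omega
  have hNcastN : ((N:ℝ)) = Ncast := by
    rw [hNdef, hNcastdef]
    have h0 : (0:ℤ) ≤ ⌈8 * B / b⌉ := by omega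
    exact_mod_cast Int.toNat_of_nonneg h0
  have hN9 : (9:ℝ) ≤ (N:ℝ) := by rw [hNcastN, hNcastdef]; exact_mod_cast hceil9
  have hNge : 8 * B / b ≤ (N:ℝ) := by rw [hNcastN]; exact Int.le_ceil _
  set t : ℝ := min (b/2) (1/4) with htdef
  have ht0 : 0 < t := lt_min (by linarith) (by norm_num)
  have htb : t ≤ b/2 := min_le_left _ _
  have ht4 : t ≤ 1/4 := min_le_right _ _
  have htb4 : b/4 ≤ t := by
    rcases le_total (b/2) (1/4) with h | h
    · rw [htdef, min_eq_left h]; linarith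
    · rw [htdef, min_eq_right h]; linarith
  have hNB : B ≤ (N:ℝ) * (t/2) := by
    have h1 : 8 * B / b ≤ (N:ℝ) := hNge
    have h2 : 8 * B ≤ (N:ℝ) * b := by
      rw [div_le_iff₀ hb] at h1; linarith
    have h3 : (0:ℝ) ≤ (N:ℝ) := by linarith
    have h4 : (N:ℝ) * (b/8) ≤ (N:ℝ) * (t/2) :=
      mul_le_mul_of_nonneg_left (by linarith) h3
    have h5 : 8 * B * (1/8) ≤ (N:ℝ) * b * (1/8) := by linarith
    nlinarith [h4, h2]
  -- main per-set bound
  have key : ∀ S : Finset α, feasible f c B S →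
      φ S ≤ (1 + min (4 * (Fintype.card α : ℝ)) (8 * Ncast - 8)) * M := by
    intro S hSfeas
    have hSfeas' : payment f c S ≤ ENNReal.ofReal B := hSfeas
    obtain ⟨av, hav0, havle, havS⟩ := xos_support hxos S
    set q : α → ℝ := fun i => c i / av i with hqdef
    have hq0 : ∀ i, 0 ≤ q i := fun i => div_nonneg (hc i) (hav0 i)
    have hterm : ∀ i ∈ S,
        ENNReal.ofReal (c i) / ENNReal.ofReal (marginal f S i) ≤ ENNReal.ofReal B :=
      fun i hi => le_trans (Finset.single_le_sum
        (f := fun j => ENNReal.ofReal (c j) / ENNReal.ofReal (marginal f S j))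
        (fun j _ => zero_le) hi) hSfeas'
    have hmpos : ∀ i ∈ S, 0 < c i → 0 < marginal f S i := by
      intro i hi hci
      by_contra h
      push_neg at h
      have h0 : ENNReal.ofReal (marginal f S i) = 0 := ENNReal.ofReal_eq_zero.mpr h
      have hne : ENNReal.ofReal (c i) ≠ 0 := by
        simp only [ne_eq, ENNReal.ofReal_eq_zero, not_le]; exact hci
      have h2 := hterm i hi
      rw [h0, ENNReal.div_zero hne] at h2
      exact (ENNReal.ofReal_ne_top) (top_le_iff.mp h2)
    have hmle : ∀ i ∈ S, marginal f S i ≤ av i := by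
      intro i hi
      have h1 : ∑ j ∈ S.erase i, av j ≤ f (S.erase i) := havle _
      have h2 : av i + ∑ j ∈ S.erase i, av j = ∑ j ∈ S, av j :=
        Finset.add_sum_erase S av hi
      have h3 : marginal f S i = f S - f (S.erase i) := rfl
      rw [h3, havS]; linarith
    have havpos : ∀ i ∈ S, 0 < c i → 0 < av i :=
      fun i hi hci => lt_of_lt_of_le (hmpos i hi hci) (hmle i hi)
    have hc_eq : ∀ i ∈ S, c i = q i * av i := by
      intro i hi
      by_cases hci : 0 < c i
      · have hav := havpos i hi hci
        rw [hqdef]; field_simp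
      · have h0 : c i = 0 := le_antisymm (not_lt.mp hci) (hc i)
        simp [hqdef, h0]
    have hqsum : ∑ i ∈ S, q i ≤ B := by
      have h2 : ∀ i ∈ S, ENNReal.ofReal (q i) ≤
          ENNReal.ofReal (c i) / ENNReal.ofReal (marginal f S i) := by
        intro i hi
        by_cases hci : 0 < c i
        · have hav := havpos i hi hci
          rw [hqdef]
          simp only []
          rw [ENNReal.ofReal_div_of_pos hav]
          exact ENNReal.div_le_div_left (ENNReal.ofReal_le_ofReal (hmle i hi)) _
        · have h0 : c i = 0 := le_antisymm (not_lt.mp hci) (hc i)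
          simp [hqdef, h0]
      have h3 : ENNReal.ofReal (∑ i ∈ S, q i) ≤ ENNReal.ofReal B := by
        rw [ENNReal.ofReal_sum_of_nonneg (fun i _ => hq0 i)]
        exact le_trans (Finset.sum_le_sum h2) hSfeas'
      exact (ENNReal.ofReal_le_ofReal_iff hB0.le).mp h3
    -- group lemma
    have hgroup : ∀ u ⊆ S, ∑ i ∈ u, q i ≤ t → ∑ i ∈ u, av i ≤ 4 * M := by
      intro u hu hqu
      obtain ⟨T', hT'mem, hT'max⟩ := Finset.exists_max_image u.powerset
        (fun U => f U - (∑ i ∈ U, av i) / 2) ⟨∅, Finset.empty_mem_powerset u⟩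
      have hT'u : T' ⊆ u := Finset.mem_powerset.mp hT'mem
      have hmargT' : ∀ i ∈ T', av i / 2 ≤ marginal f T' i := by
        intro i hi
        have h := hT'max (T'.erase i)
          (Finset.mem_powerset.mpr ((Finset.erase_subset i T').trans hT'u))
        have hsplit : av i + ∑ j ∈ T'.erase i, av j = ∑ j ∈ T', av j :=
          Finset.add_sum_erase T' av hi
        have h3 : marginal f T' i = f T' - f (T'.erase i) := rfl
        rw [h3]; linarith
      have hfT' : (∑ i ∈ u, av i) / 2 ≤ f T' := by
        have h := hT'max u (Finset.mem_powerset_self u)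
        have h2 : ∑ i ∈ u, av i ≤ f u := havle u
        have h3 : 0 ≤ ∑ i ∈ T', av i := Finset.sum_nonneg (fun i _ => hav0 i)
        linarith
      have hqT' : ∑ i ∈ T', q i ≤ t :=
        le_trans (Finset.sum_le_sum_of_subset_of_nonneg hT'u (fun i _ _ => hq0 i)) hqu
      have hpayT' : payment f c T' ≤ ENNReal.ofReal (2 * t) := by
        have hstep1 : payment f c T' ≤ ∑ i ∈ T', ENNReal.ofReal (2 * q i) := by
          apply Finset.sum_le_sum
          intro i hi
          have hiS : i ∈ S := hu (hT'u hi)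
          by_cases hci : 0 < c i
          · have hav := havpos i hiS hci
            have heq : 2 * q i = c i / (av i / 2) := by
              rw [hqdef]; field_simp
            rw [heq, ENNReal.ofReal_div_of_pos (by linarith)]
            exact ENNReal.div_le_div_left
              (ENNReal.ofReal_le_ofReal (hmargT' i hi)) _
          · have h0 : c i = 0 := le_antisymm (not_lt.mp hci) (hc i)
            simp [h0]
        have hstep2 : ∑ i ∈ T', ENNReal.ofReal (2 * q i) ≤ ENNReal.ofReal (2 * t) := by
          rw [← ENNReal.ofReal_sum_of_nonneg (fun i _ => by linarith [hq0 i])]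
          apply ENNReal.ofReal_le_ofReal
          rw [← Finset.mul_sum]
          linarith
        exact hstep1.trans hstep2
      have hfeasT' : feasible f c b T' :=
        hpayT'.trans (ENNReal.ofReal_le_ofReal (by linarith))
      have hpay1 : payment f c T' ≤ 1 :=
        hpayT'.trans (ENNReal.ofReal_le_one.mpr (by linarith))
      have htp : (payment f c T').toReal ≤ 2 * t :=
        ENNReal.toReal_le_of_le_ofReal (by linarith) hpayT'
      have hφT' := hφ.2.2.1 T' hpay1
      have hfT'0 : 0 ≤ f T' := (hf01 T').1
      have hu0 : 0 ≤ ∑ i ∈ u, av i := Finset.sum_nonneg (fun i _ => hav0 i)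
      have hval : (∑ i ∈ u, av i) / 4 ≤ φ T' := by
        have e1 : (1 - 2*t) * f T' ≤ (1 - (payment f c T').toReal) * f T' :=
          mul_le_mul_of_nonneg_right (by linarith) hfT'0
        have e2 : (1/2 : ℝ) * f T' ≤ (1 - 2*t) * f T' :=
          mul_le_mul_of_nonneg_right (by linarith) hfT'0
        have e3 : (1/2 : ℝ) * ((∑ i ∈ u, av i)/2) ≤ (1/2 : ℝ) * f T' :=
          mul_le_mul_of_nonneg_left hfT' (by norm_num)
        linarith
      linarith [hφleM T' hfeasT']
    have hsingleav : ∀ i ∈ S, q i ≤ 1/2 → av i ≤ 2 * M := by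
      intro i hi hqi
      by_cases hav : 0 < av i
      · have h1 : av i ≤ f {i} := by
          have h := havle {i}; rw [Finset.sum_singleton] at h; exact h
        have h2 := hsingval i
        have h3 : c i = q i * av i := hc_eq i hi
        have h4 : q i * av i ≤ (1/2) * av i :=
          mul_le_mul_of_nonneg_right hqi (hav0 i)
        linarith
      · have h0 : av i = 0 := le_antisymm (not_lt.mp hav) (hav0 i)
        rw [h0]; linarith
    -- reduce to a set with all q ≤ 1/2
    obtain ⟨S', hS'sub, hS'q, hφS'⟩ :
        ∃ S' ⊆ S, (∀ j ∈ S', q j ≤ 1/2) ∧ φ S ≤ ∑ j ∈ S', av j + 2 * M := by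
      by_cases hheavy : ∃ i ∈ S, 1/2 < q i
      · obtain ⟨i₀, hi₀S, hi₀q⟩ := hheavy
        have hothers : ∀ j ∈ S.erase i₀, q j ≤ 1/2 := by
          intro j hj
          by_contra h
          push_neg at h
          have hjS := Finset.mem_of_mem_erase hj
          have hne : j ≠ i₀ := Finset.ne_of_mem_erase hj
          have hsub : ({j, i₀} : Finset α) ⊆ S := by
            intro x hx
            simp only [Finset.mem_insert, Finset.mem_singleton] at hx
            rcases hx with rfl | rfl
            · exact hjS
            · exact hi₀S
          have hpair : q j + q i₀ ≤ ∑ i ∈ S, q i := by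
            rw [← Finset.sum_pair hne]
            exact Finset.sum_le_sum_of_subset_of_nonneg hsub (fun i _ _ => hq0 i)
          linarith
        have hci₀ : 0 < c i₀ := by
          by_contra h
          push_neg at h
          have h0 : c i₀ = 0 := le_antisymm h (hc i₀)
          have : q i₀ = 0 := by simp [hqdef, h0]
          linarith
        have hm₀ := hmpos i₀ hi₀S hci₀
        have hcm : c i₀ ≤ marginal f S i₀ := by
          have h := hterm i₀ hi₀S
          rw [← ENNReal.ofReal_div_of_pos hm₀] at h
          have hh : c i₀ / marginal f S i₀ ≤ B :=
            (ENNReal.ofReal_le_ofReal_iff hB0.le).mp h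
          have h5 : c i₀ ≤ B * marginal f S i₀ := by
            rw [div_le_iff₀ hm₀] at hh; linarith
          have h6 : B * marginal f S i₀ ≤ 1 * marginal f S i₀ :=
            mul_le_mul_of_nonneg_right hB hm₀.le
          linarith
        have havi₀ : av i₀ ≤ f {i₀} := by
          have h := havle {i₀}; rw [Finset.sum_singleton] at h; exact h
        have hsplit : av i₀ + ∑ j ∈ S.erase i₀, av j = ∑ j ∈ S, av j :=
          Finset.add_sum_erase S av hi₀S
        have hstep : f (S.erase i₀) ≤ ∑ j ∈ S.erase i₀, av j + M := by
          have h1 : marginal f S i₀ = f S - f (S.erase i₀) := rfl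
          have h4 := hsingval i₀
          rw [havS] at h1
          linarith
        have hφi₀ : φ {i₀} ≤ M := hφleM {i₀} (hsing i₀)
        have hmain := hφ.2.2.2 S i₀ hi₀S
        exact ⟨S.erase i₀, Finset.erase_subset i₀ S, hothers, by linarith⟩
      · push_neg at hheavy
        refine ⟨S, Finset.Subset.refl S, hheavy, ?_⟩
        have h1 : φ S ≤ f S := hφ.2.1 S
        rw [havS] at h1
        linarith
    -- Bound A (cardinality)
    have hA : ∑ j ∈ S', av j ≤ 2 * M * (Fintype.card α : ℝ) := by
      have h1 : ∑ j ∈ S', av j ≤ ∑ j ∈ S', (2 * M) :=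
        Finset.sum_le_sum (fun j hj => hsingleav j (hS'sub hj) (hS'q j hj))
      have h2 : ∑ j ∈ S', (2 * M : ℝ) = (S'.card : ℝ) * (2 * M) := by
        rw [Finset.sum_const, nsmul_eq_mul]
      have h3 : (S'.card : ℝ) ≤ (Fintype.card α : ℝ) := by
        exact_mod_cast Finset.card_le_card (Finset.subset_univ S')
      have h4 : (S'.card : ℝ) * (2*M) ≤ (Fintype.card α : ℝ) * (2*M) :=
        mul_le_mul_of_nonneg_right h3 (by linarith)
      have h5 : (Fintype.card α : ℝ) * (2*M) = 2 * M * (Fintype.card α : ℝ) := by ring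
      linarith
    -- Bound B (chunking)
    have hBbd : ∑ j ∈ S', av j ≤ (6 * (N:ℝ) + 4) * M := by
      set Sm := S'.filter (fun j => q j ≤ t/2) with hSmdef
      set Med := S'.filter (fun j => ¬ q j ≤ t/2) with hMeddef
      have hsplit : ∑ j ∈ Sm, av j + ∑ j ∈ Med, av j = ∑ j ∈ S', av j :=
        Finset.sum_filter_add_sum_filter_not S' _ av
      have hMedS : Med ⊆ S := (Finset.filter_subset _ _).trans hS'sub
      have hSmS : Sm ⊆ S := (Finset.filter_subset _ _).trans hS'sub
      have hMed : ∑ j ∈ Med, av j ≤ (N:ℝ) * (2 * M) := by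
        have hcardB : (Med.card : ℝ) * (t/2) ≤ B := by
          have h1 : ∑ j ∈ Med, (t/2) ≤ ∑ j ∈ Med, q j :=
            Finset.sum_le_sum (fun j hj =>
              le_of_lt (not_le.mp (Finset.mem_filter.mp hj).2))
          have h2 : ∑ j ∈ Med, q j ≤ ∑ i ∈ S, q i :=
            Finset.sum_le_sum_of_subset_of_nonneg hMedS (fun i _ _ => hq0 i)
          have h3 : ∑ j ∈ Med, (t/2 : ℝ) = (Med.card : ℝ) * (t/2) := by
            rw [Finset.sum_const, nsmul_eq_mul]
          linarith
        have hcardN : (Med.card : ℝ) ≤ (N:ℝ) := by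
          have h6 : (Med.card : ℝ) * (t/2) ≤ (N:ℝ) * (t/2) := hcardB.trans hNB
          exact le_of_mul_le_mul_right h6 (by linarith)
        have h4 : ∑ j ∈ Med, av j ≤ (Med.card : ℝ) * (2 * M) := by
          have h5 : ∑ j ∈ Med, av j ≤ ∑ j ∈ Med, (2 * M) :=
            Finset.sum_le_sum (fun j hj => hsingleav j (hMedS hj)
              (hS'q j (Finset.mem_filter.mp hj).1))
          rw [Finset.sum_const, nsmul_eq_mul] at h5
          exact h5
        have h7 : (Med.card : ℝ) * (2*M) ≤ (N:ℝ) * (2 * M) :=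
          mul_le_mul_of_nonneg_right hcardN (by linarith)
        linarith
      have hSm : ∑ j ∈ Sm, av j ≤ ((N:ℝ) + 1) * (4 * M) := by
        apply pack q av t (4 * M) ht0 (by linarith) S hgroup N Sm hSmS
          (fun i _ => hq0 i)
          (fun i hi => (Finset.mem_filter.mp hi).2)
        have h2 : ∑ j ∈ Sm, q j ≤ ∑ i ∈ S, q i :=
          Finset.sum_le_sum_of_subset_of_nonneg hSmS (fun i _ _ => hq0 i)
        linarith
      have heq : ((N:ℝ) + 1) * (4 * M) + (N:ℝ) * (2 * M) = (6 * (N:ℝ) + 4) * M := by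
        ring
      linarith
    -- finish
    have hn1 : (1:ℝ) ≤ (Fintype.card α : ℝ) := by
      exact_mod_cast Fintype.card_pos
    rcases le_total (4 * (Fintype.card α : ℝ)) (8 * Ncast - 8) with h | h
    · rw [min_eq_left h]
      have hx : (0:ℝ) ≤ M * (2 * (Fintype.card α : ℝ) - 1) :=
        mul_nonneg hM0 (by linarith)
      have hy : (1 + 4 * (Fintype.card α : ℝ)) * M
          = 2 * M * (Fintype.card α : ℝ) + 2 * M + (M * (2 * (Fintype.card α : ℝ) - 1)) := by
        ring
      linarith
    · rw [min_eq_right h, ← hNcastN]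
      have hx : (0:ℝ) ≤ M * (2 * (N:ℝ) - 13) :=
        mul_nonneg hM0 (by linarith)
      have hy : (1 + (8 * (N:ℝ) - 8)) * M
          = (6 * (N:ℝ) + 4) * M + 2 * M + (M * (2 * (N:ℝ) - 13)) := by
        ring
      linarith
  -- conclude
  unfold maxVal
  apply csSup_le
  · exact ⟨φ ∅, ⟨∅, hfeas_empty_B, rfl⟩⟩
  · rintro x ⟨S, hS, rfl⟩
    exact key S hS
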